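/- Assume condition (PCLI1). Then for every initial distribution p on ℝ with ∫ w dp < ∞, the function z ↦ G(p,z) is discontinuous at a point z ∈ ℝ if and only if μ_p^z{z} > 0, i.e., if and only if under the z-policy started from X₀ ∼ p there exists a time t ≥ 0 at which the chain is at z with positive probability. -/

import Mathlib

open MeasureTheory ProbabilityTheory Filter Topology Set

noncomputable section

/-- A restless bandit project: the model data (discount factor `β`, passive/active
Markov transition kernels `κ false`/`κ true`, reward `r` and resource consumption `c`),
Assumption 1 (the weighted sup-norm conditions for weight `w` and constants `M`, `γ`),
together with the threshold-policy performance metrics `F`, `G` (for `z`-policies,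
active iff `x > z`), `Fm`, `Gm` (for `z⁻`-policies, active iff `x ≥ z`), and the
optimal value function `V lam` of the `lam`-price problem, each of which is the
(unique) `w`-bounded measurable solution of its fixed-point equation. -/
structure Bandit where
  β : ℝ
  κ : Bool → Kernel ℝ ℝ
  r : ℝ → Bool → ℝ
  c : ℝ → Bool → ℝ
  w : ℝ → ℝ
  M : ℝ
  γ : ℝ
  F : ℝ → EReal → ℝ
  G : ℝ → EReal → ℝ
  Fm : ℝ → EReal → ℝ
  Gm : ℝ → EReal → ℝ
  V : ℝ → ℝ → ℝ
  hβ0 : 0 ≤ β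
  hβ1 : β < 1
  hκ : ∀ a, IsMarkovKernel (κ a)
  hr_cont : ∀ a, Continuous fun x => r x a
  hc_cont : ∀ a, Continuous fun x => c x a
  hc0 : ∀ x, 0 ≤ c x false
  hc01 : ∀ x, c x false < c x true
  hw_meas : Measurable w
  hw_one : ∀ x, 1 ≤ w x
  hM : 0 < M
  hβγ : β ≤ γ
  hγ1 : γ < 1
  hr_bd : ∀ x a, |r x a| ≤ M * w x
  hc_bd : ∀ x a, c x a ≤ M * w x
  hw_int : ∀ a x, Integrable w (κ a x)
  hw_drift : ∀ a x, β * ∫ y, w y ∂(κ a x) ≤ γ * w x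
  hF_meas : ∀ z, Measurable fun x => F x z
  hG_meas : ∀ z, Measurable fun x => G x z
  hFm_meas : ∀ z, Measurable fun x => Fm x z
  hGm_meas : ∀ z, Measurable fun x => Gm x z
  hV_meas : ∀ lam, Measurable (V lam)
  hF_bdd : ∀ z, ∃ C, ∀ x, |F x z| ≤ C * w x
  hG_bdd : ∀ z, ∃ C, ∀ x, |G x z| ≤ C * w x
  hFm_bdd : ∀ z, ∃ C, ∀ x, |Fm x z| ≤ C * w x
  hGm_bdd : ∀ z, ∃ C, ∀ x, |Gm x z| ≤ C * w x
  hV_bdd : ∀ lam, ∃ C, ∀ x, |V lam x| ≤ C * w x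
  hF_eq : ∀ x z, F x z =
    r x (decide (z < (x : EReal))) +
      β * ∫ y, F y z ∂(κ (decide (z < (x : EReal))) x)
  hG_eq : ∀ x z, G x z =
    c x (decide (z < (x : EReal))) +
      β * ∫ y, G y z ∂(κ (decide (z < (x : EReal))) x)
  hFm_eq : ∀ x z, Fm x z =
    r x (decide (z ≤ (x : EReal))) +
      β * ∫ y, Fm y z ∂(κ (decide (z ≤ (x : EReal))) x)
  hGm_eq : ∀ x z, Gm x z =
    c x (decide (z ≤ (x : EReal))) +
      β * ∫ y, Gm y z ∂(κ (decide (z ≤ (x : EReal))) x)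
  hV_eq : ∀ lam x, V lam x =
    max (r x false - lam * c x false + β * ∫ y, V lam y ∂(κ false x))
        (r x true - lam * c x true + β * ∫ y, V lam y ∂(κ true x))

/-- `ν` is the Lebesgue–Stieltjes measure of the (bounded nonincreasing
right-continuous) function `h`: `ν(z₁,z₂] = h z₁ - h z₂`. -/
def IsLSMeasureOfAnti (h : ℝ → ℝ) (ν : Measure ℝ) : Prop :=
  ∀ z₁ z₂ : ℝ, z₁ ≤ z₂ → ν (Set.Ioc z₁ z₂) = ENNReal.ofReal (h z₁ - h z₂)

/-- `ν` is the Lebesgue–Stieltjes measure of the (bounded nondecreasing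
right-continuous) function `h`: `ν(z₁,z₂] = h z₂ - h z₁`. -/
def IsLSMeasureOfMono (h : ℝ → ℝ) (ν : Measure ℝ) : Prop :=
  ∀ z₁ z₂ : ℝ, z₁ ≤ z₂ → ν (Set.Ioc z₁ z₂) = ENNReal.ofReal (h z₂ - h z₁)

/-- The real interval `(z₁, z₂] ⊆ ℝ` with extended-real endpoints. -/
def iocR (z₁ z₂ : EReal) : Set ℝ := {y : ℝ | z₁ < (y : EReal) ∧ (y : EReal) ≤ z₂}

/-- `t`-step distribution of the Markov chain with kernel `κ` and initial law `p`. -/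
def kerIter (κ : Kernel ℝ ℝ) : ℕ → Measure ℝ → Measure ℝ
  | 0, p => p
  | (t + 1), p => (kerIter κ t p).bind fun x => κ x

namespace Bandit

variable (P : Bandit)

/-- Marginal reward metric `f(x,z)` of the `z`-policy. -/
def f (x : ℝ) (z : EReal) : ℝ :=
  (P.r x true - P.r x false) +
    P.β * ((∫ y, P.F y z ∂(P.κ true x)) - ∫ y, P.F y z ∂(P.κ false x))

/-- Marginal resource metric `g(x,z)` of the `z`-policy. -/
def g (x : ℝ) (z : EReal) : ℝ :=
  (P.c x true - P.c x false) +
    P.β * ((∫ y, P.G y z ∂(P.κ true x)) - ∫ y, P.G y z ∂(P.κ false x))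

/-- Marginal reward metric `f(x,z⁻)` of the `z⁻`-policy. -/
def fm (x : ℝ) (z : EReal) : ℝ :=
  (P.r x true - P.r x false) +
    P.β * ((∫ y, P.Fm y z ∂(P.κ true x)) - ∫ y, P.Fm y z ∂(P.κ false x))

/-- Marginal resource metric `g(x,z⁻)` of the `z⁻`-policy. -/
def gm (x : ℝ) (z : EReal) : ℝ :=
  (P.c x true - P.c x false) +
    P.β * ((∫ y, P.Gm y z ∂(P.κ true x)) - ∫ y, P.Gm y z ∂(P.κ false x))

/-- Marginal productivity metric `m(x,z) = f(x,z)/g(x,z)`. -/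
def m (x : ℝ) (z : EReal) : ℝ := P.f x z / P.g x z

/-- Marginal productivity metric `m(x,z⁻) = f(x,z⁻)/g(x,z⁻)`. -/
def mm (x : ℝ) (z : EReal) : ℝ := P.fm x z / P.gm x z

/-- The marginal productivity (MP) index `m*(x) = m(x,x)`. -/
def mStar (x : ℝ) : ℝ := P.m x (x : EReal)

/-- The active action is `P_lam`-optimal at `x`. -/
def ActOpt (lam x : ℝ) : Prop :=
  P.r x false - lam * P.c x false + P.β * ∫ y, P.V lam y ∂(P.κ false x) ≤
    P.r x true - lam * P.c x true + P.β * ∫ y, P.V lam y ∂(P.κ true x)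

/-- The passive action is `P_lam`-optimal at `x`. -/
def PassOpt (lam x : ℝ) : Prop :=
  P.r x true - lam * P.c x true + P.β * ∫ y, P.V lam y ∂(P.κ true x) ≤
    P.r x false - lam * P.c x false + P.β * ∫ y, P.V lam y ∂(P.κ false x)

/-- The project is indexable with index `ν`. -/
def Indexable (ν : ℝ → ℝ) : Prop :=
  ∀ lam x, (P.ActOpt lam x ↔ lam ≤ ν x) ∧ (P.PassOpt lam x ↔ ν x ≤ lam)

/-- The `z`-policy is `P_lam`-optimal. -/
def ZPolicyOpt (z : EReal) (lam : ℝ) : Prop :=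
  ∀ x, P.F x z - lam * P.G x z = P.V lam x

/-- The `z⁻`-policy is `P_lam`-optimal. -/
def ZmPolicyOpt (z : EReal) (lam : ℝ) : Prop :=
  ∀ x, P.Fm x z - lam * P.Gm x z = P.V lam x

/-- The project is strongly threshold-indexable with index `ν`. -/
def StronglyThresholdIndexable (ν : ℝ → ℝ) : Prop :=
  P.Indexable ν ∧
    ∀ lam : ℝ, ∃ z : EReal, P.ZPolicyOpt z lam ∧ P.ZmPolicyOpt z lam

/-- PCL-indexability condition (PCLI1). -/
def PCLI1 : Prop := ∀ (x : ℝ) (z : EReal), 0 < P.g x z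

/-- PCL-indexability condition (PCLI2). -/
def PCLI2 : Prop :=
  Monotone P.mStar ∧ Continuous P.mStar ∧ BddBelow (Set.range P.mStar)

/-- PCL-indexability condition (PCLI3). -/
def PCLI3 : Prop :=
  ∀ x : ℝ, ∀ ν : Measure ℝ, IsLSMeasureOfAnti (fun z : ℝ => P.G x z) ν →
    ∀ z₁ z₂ : ℝ, z₁ < z₂ →
      P.F x z₂ - P.F x z₁ = -∫ z in Set.Ioc z₁ z₂, P.mStar z ∂ν

/-- The project is PCL-indexable. -/
def PCLIndexable : Prop := P.PCLI1 ∧ P.PCLI2 ∧ P.PCLI3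

/-- Reward metric with initial distribution `p`. -/
def Fp (p : Measure ℝ) (z : EReal) : ℝ := ∫ x, P.F x z ∂p

/-- Resource metric with initial distribution `p`. -/
def Gp (p : Measure ℝ) (z : EReal) : ℝ := ∫ x, P.G x z ∂p

/-- `z⁻`-policy reward metric with initial distribution `p`. -/
def Fmp (p : Measure ℝ) (z : EReal) : ℝ := ∫ x, P.Fm x z ∂p

/-- `z⁻`-policy resource metric with initial distribution `p`. -/
def Gmp (p : Measure ℝ) (z : EReal) : ℝ := ∫ x, P.Gm x z ∂p

/-- An admissible initial distribution: a probability measure with `∫ w dp < ∞`. -/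
def IsInitDist (p : Measure ℝ) : Prop :=
  IsProbabilityMeasure p ∧ Integrable P.w p

/-- The transition kernel of the `z`-policy (active iff `x > z`). -/
def thrKer (z : EReal) : Kernel ℝ ℝ :=
  haveI : DecidablePred (· ∈ {x : ℝ | z < (x : EReal)}) := Classical.decPred _
  Kernel.piecewise
    (show MeasurableSet {x : ℝ | z < (x : EReal)} from
      measurable_coe_real_ereal measurableSet_Ioi)
    (P.κ true) (P.κ false)

/-- The transition kernel of the `z⁻`-policy (active iff `x ≥ z`). -/
def thrKerM (z : EReal) : Kernel ℝ ℝ :=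
  haveI : DecidablePred (· ∈ {x : ℝ | z ≤ (x : EReal)}) := Classical.decPred _
  Kernel.piecewise
    (show MeasurableSet {x : ℝ | z ≤ (x : EReal)} from
      measurable_coe_real_ereal measurableSet_Ici)
    (P.κ true) (P.κ false)

/-- The (discounted) state occupation measure `μ_p^z` of the `z`-policy. -/
def occ (z : EReal) (p : Measure ℝ) : Measure ℝ :=
  Measure.sum fun t : ℕ => ENNReal.ofReal (P.β ^ t) • kerIter (P.thrKer z) t p

/-- The (discounted) state occupation measure `μ_p^{z⁻}` of the `z⁻`-policy. -/
def occM (z : EReal) (p : Measure ℝ) : Measure ℝ :=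
  Measure.sum fun t : ℕ => ENNReal.ofReal (P.β ^ t) • kerIter (P.thrKerM z) t p

end Bandit

/-- Finite-horizon reward metric `F_k(x,z)` (value iteration). -/
def Bandit.Fk (P : Bandit) : ℕ → ℝ → EReal → ℝ
  | 0, x, z => P.r x (decide (z < (x : EReal)))
  | (k + 1), x, z =>
      P.r x (decide (z < (x : EReal))) +
        P.β * ∫ y, Bandit.Fk P k y z ∂(P.κ (decide (z < (x : EReal))) x)

/-- Finite-horizon resource metric `G_k(x,z)` (value iteration). -/
def Bandit.Gk (P : Bandit) : ℕ → ℝ → EReal → ℝ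
  | 0, x, z => P.c x (decide (z < (x : EReal)))
  | (k + 1), x, z =>
      P.c x (decide (z < (x : EReal))) +
        P.β * ∫ y, Bandit.Gk P k y z ∂(P.κ (decide (z < (x : EReal))) x)

/-- Finite-horizon marginal reward metric `f_k(x,z)`. -/
def Bandit.fk (P : Bandit) : ℕ → ℝ → EReal → ℝ
  | 0, x, _ => P.r x true - P.r x false
  | (k + 1), x, z =>
      (P.r x true - P.r x false) +
        P.β * ((∫ y, P.Fk k y z ∂(P.κ true x)) - ∫ y, P.Fk k y z ∂(P.κ false x))

/-- Finite-horizon marginal resource metric `g_k(x,z)`. -/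
def Bandit.gk (P : Bandit) : ℕ → ℝ → EReal → ℝ
  | 0, x, _ => P.c x true - P.c x false
  | (k + 1), x, z =>
      (P.c x true - P.c x false) +
        P.β * ((∫ y, P.Gk k y z ∂(P.κ true x)) - ∫ y, P.Gk k y z ∂(P.κ false x))

namespace Bandit

variable (P : Bandit)

/-- Finite-horizon MP metric `m_k(x,z)`. -/
def mk' (k : ℕ) (x : ℝ) (z : EReal) : ℝ := P.fk k x z / P.gk k x z

/-- Finite-horizon MP index `m*_k(x)`. -/
def mkStar (k : ℕ) (x : ℝ) : ℝ := P.mk' k x (x : EReal)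

/-- `g̲(x,z) = inf_k g_k(x,z)`. -/
def gbar (x : ℝ) (z : EReal) : ℝ := ⨅ k : ℕ, P.gk k x z

end Bandit


section Aux

open ENNReal

namespace Bandit

variable (P : Bandit)

lemma w_nonneg (x : ℝ) : 0 ≤ P.w x := le_trans zero_le_one (P.hw_one x)

lemma γ_nonneg : 0 ≤ P.γ := le_trans P.hβ0 P.hβγ

lemma one_sub_γ_pos : 0 < 1 - P.γ := by linarith [P.hγ1]

/-- Uniform `w`-bound for fixed points. -/
lemma abs_fp_bound (u : ℝ → ℝ) (a : ℝ → Bool) (C : ℝ)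
    (hC : ∀ x, |u x| ≤ C * P.w x)
    (hint : ∀ x, Integrable u (P.κ (a x) x))
    (hrec : ∀ x, |u x| ≤ P.M * P.w x + P.β * |∫ y, u y ∂P.κ (a x) x|) :
    ∀ x, |u x| ≤ P.M / (1 - P.γ) * P.w x := by
  have hγ0 := P.γ_nonneg
  have h1γ := P.one_sub_γ_pos
  have hMdiv : 0 ≤ P.M / (1 - P.γ) := le_of_lt (div_pos P.hM h1γ)
  have step : ∀ B : ℝ, 0 ≤ B → (∀ x, |u x| ≤ B * P.w x) →
      ∀ x, |u x| ≤ (P.M + P.γ * B) * P.w x := by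
    intro B hB hBx x
    have h2 : |∫ y, u y ∂P.κ (a x) x| ≤ ∫ y, |u y| ∂P.κ (a x) x := by
      simpa [Real.norm_eq_abs] using
        norm_integral_le_integral_norm (μ := P.κ (a x) x) u
    have h3 : ∫ y, |u y| ∂P.κ (a x) x ≤ ∫ y, B * P.w y ∂P.κ (a x) x :=
      integral_mono (hint x).abs ((P.hw_int (a x) x).const_mul B) hBx
    have h4 : ∫ y, B * P.w y ∂P.κ (a x) x = B * ∫ y, P.w y ∂P.κ (a x) x :=
      integral_const_mul B _
    have h5 : P.β * |∫ y, u y ∂P.κ (a x) x| ≤ B * (P.β * ∫ y, P.w y ∂P.κ (a x) x) := by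
      have := mul_le_mul_of_nonneg_left (h2.trans (h3.trans_eq h4)) P.hβ0
      nlinarith
    have h6 : B * (P.β * ∫ y, P.w y ∂P.κ (a x) x) ≤ B * (P.γ * P.w x) :=
      mul_le_mul_of_nonneg_left (P.hw_drift (a x) x) hB
    have := hrec x
    nlinarith
  set C' := max C 0 with hC'
  have hC'0 : 0 ≤ C' := le_max_right _ _
  have claim : ∀ k x, |u x| ≤ (P.M / (1 - P.γ) + P.γ ^ k * C') * P.w x := by
    intro k
    induction k with
    | zero =>
      intro x
      have : C ≤ P.M / (1 - P.γ) + P.γ ^ 0 * C' := by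
        simp only [pow_zero, one_mul]
        have : C ≤ C' := le_max_left _ _
        linarith
      exact (hC x).trans (mul_le_mul_of_nonneg_right this (P.w_nonneg x))
    | succ k ih =>
      intro x
      have hB : 0 ≤ P.M / (1 - P.γ) + P.γ ^ k * C' := by positivity
      have := step _ hB ih x
      have heq : P.M + P.γ * (P.M / (1 - P.γ) + P.γ ^ k * C')
          = P.M / (1 - P.γ) + P.γ ^ (k + 1) * C' := by
        field_simp
        ring
      linarith [this, heq ▸ this]
  intro x
  have htend : Filter.Tendsto (fun k : ℕ => (P.M / (1 - P.γ) + P.γ ^ k * C') * P.w x)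
      Filter.atTop (nhds (P.M / (1 - P.γ) * P.w x)) := by
    have h0 : Filter.Tendsto (fun k : ℕ => P.γ ^ k) Filter.atTop (nhds 0) :=
      tendsto_pow_atTop_nhds_zero_of_lt_one hγ0 P.hγ1
    have := ((h0.mul_const C').const_add (P.M / (1 - P.γ))).mul_const (P.w x)
    simpa using this
  exact ge_of_tendsto' htend (fun k => claim k x)

lemma integrable_of_wbound {μ : Measure ℝ}
    (hw : ∫⁻ x, ENNReal.ofReal (P.w x) ∂μ ≠ ⊤) {u : ℝ → ℝ}
    (hm : AEStronglyMeasurable u μ) {C : ℝ} (hC : ∀ x, |u x| ≤ C * P.w x) :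
    Integrable u μ := by
  have hwint : Integrable P.w μ := by
    refine ⟨P.hw_meas.aestronglyMeasurable, ?_⟩
    rw [hasFiniteIntegral_iff_norm]
    have : ∀ x, ENNReal.ofReal ‖P.w x‖ = ENNReal.ofReal (P.w x) := fun x => by
      rw [Real.norm_of_nonneg (P.w_nonneg x)]
    rw [lintegral_congr this]
    exact lt_top_iff_ne_top.2 hw
  refine Integrable.mono' (hwint.const_mul C) hm ?_
  exact Filter.Eventually.of_forall fun x => by
    rw [Real.norm_eq_abs]; exact hC x

lemma lintegral_w_kernel (a : Bool) (x : ℝ) :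
    ∫⁻ y, ENNReal.ofReal (P.w y) ∂P.κ a x = ENNReal.ofReal (∫ y, P.w y ∂P.κ a x) :=
  (ofReal_integral_eq_lintegral_ofReal (P.hw_int a x)
    (Filter.Eventually.of_forall P.w_nonneg)).symm

lemma integrable_G_kernel (a : Bool) (x : ℝ) (z : EReal) :
    Integrable (fun y => P.G y z) (P.κ a x) := by
  obtain ⟨C, hC⟩ := P.hG_bdd z
  refine P.integrable_of_wbound ?_ (P.hG_meas z).aestronglyMeasurable hC
  rw [P.lintegral_w_kernel]
  exact ENNReal.ofReal_ne_top

lemma integrable_Gm_kernel (a : Bool) (x : ℝ) (z : EReal) :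
    Integrable (fun y => P.Gm y z) (P.κ a x) := by
  obtain ⟨C, hC⟩ := P.hGm_bdd z
  refine P.integrable_of_wbound ?_ (P.hGm_meas z).aestronglyMeasurable hC
  rw [P.lintegral_w_kernel]
  exact ENNReal.ofReal_ne_top

lemma c_nonneg (x : ℝ) (a : Bool) : 0 ≤ P.c x a := by
  cases a
  · exact P.hc0 x
  · exact le_of_lt (lt_of_le_of_lt (P.hc0 x) (P.hc01 x))

lemma G_bound (x : ℝ) (z : EReal) : |P.G x z| ≤ P.M / (1 - P.γ) * P.w x := by
  obtain ⟨C, hC⟩ := P.hG_bdd z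
  refine P.abs_fp_bound (fun x => P.G x z) (fun x => decide (z < (x : EReal))) C hC
    (fun x => P.integrable_G_kernel _ _ _) (fun x => ?_) x
  show |P.G x z| ≤ P.M * P.w x + P.β * |∫ y, P.G y z ∂P.κ (decide (z < (x : EReal))) x|
  rw [P.hG_eq x z]
  have h1 : |P.c x (decide (z < (x : EReal)))| ≤ P.M * P.w x := by
    rw [abs_of_nonneg (P.c_nonneg x _)]; exact P.hc_bd x _
  calc |P.c x (decide (z < (x:EReal))) + P.β * ∫ y, P.G y z ∂P.κ (decide (z < (x:EReal))) x|
      ≤ |P.c x (decide (z < (x:EReal)))| + |P.β * ∫ y, P.G y z ∂P.κ (decide (z < (x:EReal))) x| :=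
        abs_add_le _ _
    _ ≤ P.M * P.w x + P.β * |∫ y, P.G y z ∂P.κ (decide (z < (x:EReal))) x| := by
        rw [abs_mul, abs_of_nonneg P.hβ0]; exact add_le_add_left h1 _

lemma Gm_bound (x : ℝ) (z : EReal) : |P.Gm x z| ≤ P.M / (1 - P.γ) * P.w x := by
  obtain ⟨C, hC⟩ := P.hGm_bdd z
  refine P.abs_fp_bound (fun x => P.Gm x z) (fun x => decide (z ≤ (x : EReal))) C hC
    (fun x => P.integrable_Gm_kernel _ _ _) (fun x => ?_) x
  show |P.Gm x z| ≤ P.M * P.w x + P.β * |∫ y, P.Gm y z ∂P.κ (decide (z ≤ (x : EReal))) x|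
  rw [P.hGm_eq x z]
  have h1 : |P.c x (decide (z ≤ (x : EReal)))| ≤ P.M * P.w x := by
    rw [abs_of_nonneg (P.c_nonneg x _)]; exact P.hc_bd x _
  calc |P.c x (decide (z ≤ (x:EReal))) + P.β * ∫ y, P.Gm y z ∂P.κ (decide (z ≤ (x:EReal))) x|
      ≤ |P.c x (decide (z ≤ (x:EReal)))| + |P.β * ∫ y, P.Gm y z ∂P.κ (decide (z ≤ (x:EReal))) x| :=
        abs_add_le _ _
    _ ≤ P.M * P.w x + P.β * |∫ y, P.Gm y z ∂P.κ (decide (z ≤ (x:EReal))) x| := by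
        rw [abs_mul, abs_of_nonneg P.hβ0]; exact add_le_add_left h1 _





/-- The uniform bound on the marginal resource metric. -/
def Cg : ℝ := 2 * P.M + 2 * P.γ * (P.M / (1 - P.γ))

lemma Cg_nonneg : 0 ≤ P.Cg := by
  have h1 := P.hM
  have h2 := P.γ_nonneg
  have h3 := P.one_sub_γ_pos
  have : 0 ≤ P.M / (1 - P.γ) := le_of_lt (div_pos h1 h3)
  have : 0 ≤ 2 * P.γ * (P.M / (1 - P.γ)) := by positivity
  unfold Cg; nlinarith

lemma integral_G_term_le (a : Bool) (x : ℝ) (z : EReal) :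
    P.β * |∫ y, P.G y z ∂P.κ a x| ≤ P.γ * (P.M / (1 - P.γ)) * P.w x := by
  have hMdiv : 0 ≤ P.M / (1 - P.γ) := le_of_lt (div_pos P.hM P.one_sub_γ_pos)
  have h1 : |∫ y, P.G y z ∂P.κ a x| ≤ ∫ y, |P.G y z| ∂P.κ a x := by
    simpa [Real.norm_eq_abs] using
      norm_integral_le_integral_norm (μ := P.κ a x) (fun y => P.G y z)
  have h2 : ∫ y, |P.G y z| ∂P.κ a x ≤ ∫ y, (P.M / (1 - P.γ)) * P.w y ∂P.κ a x :=
    integral_mono (P.integrable_G_kernel a x z).abs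
      ((P.hw_int a x).const_mul _) (fun y => P.G_bound y z)
  rw [integral_const_mul] at h2
  have h3 := mul_le_mul_of_nonneg_left (h1.trans h2) P.hβ0
  have h4 := mul_le_mul_of_nonneg_left (P.hw_drift a x) hMdiv
  nlinarith
lemma g_bound (x : ℝ) (z : EReal) : |P.g x z| ≤ P.Cg * P.w x := by
  have hw1 := P.hw_one x
  have h1 : |P.c x true - P.c x false| ≤ 2 * P.M * P.w x := by
    have := abs_sub_abs_le_abs_sub (P.c x true) (P.c x false)
    have ha : |P.c x true| ≤ P.M * P.w x := by
      rw [abs_of_nonneg (P.c_nonneg x _)]; exact P.hc_bd x _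
    have hb : |P.c x false| ≤ P.M * P.w x := by
      rw [abs_of_nonneg (P.c_nonneg x _)]; exact P.hc_bd x _
    calc |P.c x true - P.c x false| ≤ |P.c x true| + |P.c x false| := abs_sub _ _
      _ ≤ 2 * P.M * P.w x := by linarith
  have h2 : P.β * |(∫ y, P.G y z ∂P.κ true x) - ∫ y, P.G y z ∂P.κ false x|
      ≤ 2 * P.γ * (P.M / (1 - P.γ)) * P.w x := by
    have ht := P.integral_G_term_le true x z
    have hf := P.integral_G_term_le false x z
    have habs : |(∫ y, P.G y z ∂P.κ true x) - ∫ y, P.G y z ∂P.κ false x|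
        ≤ |∫ y, P.G y z ∂P.κ true x| + |∫ y, P.G y z ∂P.κ false x| := abs_sub _ _
    nlinarith [abs_nonneg ((∫ y, P.G y z ∂P.κ true x) - ∫ y, P.G y z ∂P.κ false x),
      mul_le_mul_of_nonneg_left habs P.hβ0]
  calc |P.g x z| ≤ |P.c x true - P.c x false|
        + |P.β * ((∫ y, P.G y z ∂P.κ true x) - ∫ y, P.G y z ∂P.κ false x)| := abs_add_le _ _
    _ ≤ 2 * P.M * P.w x + 2 * P.γ * (P.M / (1 - P.γ)) * P.w x := by
        rw [abs_mul, abs_of_nonneg P.hβ0]; exact add_le_add h1 h2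
    _ = P.Cg * P.w x := by unfold Cg; ring

lemma integral_G_kernel_meas (a : Bool) (z : EReal) :
    Measurable fun x => ∫ y, P.G y z ∂P.κ a x := by
  haveI := P.hκ a
  have : StronglyMeasurable fun x : ℝ => ∫ y, (fun _ y => P.G y z) x y ∂P.κ a x :=
    StronglyMeasurable.integral_kernel_prod_right
      (((P.hG_meas z).comp measurable_snd).stronglyMeasurable)
  exact this.measurable

lemma g_meas (z : EReal) : Measurable fun x => P.g x z := by
  unfold g
  exact (((P.hc_cont true).measurable.sub (P.hc_cont false).measurable).add
    (measurable_const.mul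
      ((P.integral_G_kernel_meas true z).sub (P.integral_G_kernel_meas false z))))

lemma thrKer_apply (z : EReal) (x : ℝ) :
    P.thrKer z x = P.κ (decide (z < (x : EReal))) x := by
  rw [thrKer]
  rw [@Kernel.piecewise_apply _ _ _ _ _ _ _ _ (Classical.decPred _)]
  by_cases h : z < (x : EReal)
  · simp [h]
  · simp [h]

lemma thrKerM_apply (z : EReal) (x : ℝ) :
    P.thrKerM z x = P.κ (decide (z ≤ (x : EReal))) x := by
  rw [thrKerM]
  rw [@Kernel.piecewise_apply _ _ _ _ _ _ _ _ (Classical.decPred _)]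
  by_cases h : z ≤ (x : EReal)
  · simp [h]
  · simp [h]

instance thrKer_markov (z : EReal) : IsMarkovKernel (P.thrKer z) := by
  haveI := P.hκ true; haveI := P.hκ false
  unfold thrKer; infer_instance

instance thrKerM_markov (z : EReal) : IsMarkovKernel (P.thrKerM z) := by
  haveI := P.hκ true; haveI := P.hκ false
  unfold thrKerM; infer_instance

end Bandit

end Aux


section Aux2

open ENNReal Filter

namespace Bandit

variable (P : Bandit)

lemma kerIter_succ (κ' : Kernel ℝ ℝ) (t : ℕ) (p : Measure ℝ) :
    kerIter κ' (t + 1) p = (kerIter κ' t p).bind (fun x => κ' x) := rfl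

lemma kerIter_prob (κ' : Kernel ℝ ℝ) [IsMarkovKernel κ'] (t : ℕ) (p : Measure ℝ)
    [IsProbabilityMeasure p] : IsProbabilityMeasure (kerIter κ' t p) := by
  induction t with
  | zero => exact ‹_›
  | succ t ih =>
    haveI := ih
    constructor
    rw [kerIter_succ, Measure.bind_apply MeasurableSet.univ (Kernel.measurable κ').aemeasurable]
    simp [measure_univ]

/-- weighted `lintegral`. -/
def Wl (μ : Measure ℝ) : ℝ≥0∞ := ∫⁻ x, ENNReal.ofReal (P.w x) ∂μ

lemma Wl_kernel (κ' : Kernel ℝ ℝ) (hint : ∀ x, Integrable P.w (κ' x)) (x : ℝ) :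
    P.Wl (κ' x) = ENNReal.ofReal (∫ y, P.w y ∂κ' x) :=
  (ofReal_integral_eq_lintegral_ofReal (hint x)
    (Filter.Eventually.of_forall P.w_nonneg)).symm

lemma Wl_bind (κ' : Kernel ℝ ℝ) [IsSFiniteKernel κ']
    (hdrift : ∀ x, P.β * ∫ y, P.w y ∂κ' x ≤ P.γ * P.w x)
    (hint : ∀ x, Integrable P.w (κ' x)) (m : Measure ℝ) :
    ENNReal.ofReal P.β * P.Wl (m.bind (fun x => κ' x))
      ≤ ENNReal.ofReal P.γ * P.Wl m := by
  rw [Wl, Measure.lintegral_bind (Kernel.measurable κ').aemeasurable P.hw_meas.ennreal_ofReal.aemeasurable]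
  have hmeas : Measurable fun x => ∫⁻ y, ENNReal.ofReal (P.w y) ∂κ' x :=
    Measurable.lintegral_kernel (κ := κ') P.hw_meas.ennreal_ofReal
  rw [← lintegral_const_mul _ hmeas]
  rw [Wl, ← lintegral_const_mul _ P.hw_meas.ennreal_ofReal]
  refine lintegral_mono fun x => ?_
  have h1 : (∫⁻ y, ENNReal.ofReal (P.w y) ∂κ' x) = ENNReal.ofReal (∫ y, P.w y ∂κ' x) :=
    P.Wl_kernel κ' hint x
  rw [h1, ← ENNReal.ofReal_mul P.hβ0, ← ENNReal.ofReal_mul P.γ_nonneg]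
  exact ENNReal.ofReal_le_ofReal (hdrift x)

lemma Wl_iter (κ' : Kernel ℝ ℝ) [IsSFiniteKernel κ']
    (hdrift : ∀ x, P.β * ∫ y, P.w y ∂κ' x ≤ P.γ * P.w x)
    (hint : ∀ x, Integrable P.w (κ' x)) (p : Measure ℝ) (t : ℕ) :
    ENNReal.ofReal (P.β ^ t) * P.Wl (kerIter κ' t p)
      ≤ (ENNReal.ofReal P.γ) ^ t * P.Wl p := by
  induction t with
  | zero => simp [kerIter]
  | succ t ih =>
    have h1 : ENNReal.ofReal (P.β ^ (t + 1)) = ENNReal.ofReal (P.β ^ t) * ENNReal.ofReal P.β := by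
      rw [← ENNReal.ofReal_mul (pow_nonneg P.hβ0 t), pow_succ]
    rw [h1, kerIter_succ]
    calc ENNReal.ofReal (P.β ^ t) * ENNReal.ofReal P.β * P.Wl ((kerIter κ' t p).bind fun x => κ' x)
        = ENNReal.ofReal (P.β ^ t) * (ENNReal.ofReal P.β * P.Wl ((kerIter κ' t p).bind fun x => κ' x)) := by ring
      _ ≤ ENNReal.ofReal (P.β ^ t) * (ENNReal.ofReal P.γ * P.Wl (kerIter κ' t p)) :=
          mul_le_mul_of_nonneg_left (P.Wl_bind κ' hdrift hint _) zero_le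
      _ = ENNReal.ofReal P.γ * (ENNReal.ofReal (P.β ^ t) * P.Wl (kerIter κ' t p)) := by ring
      _ ≤ ENNReal.ofReal P.γ * ((ENNReal.ofReal P.γ) ^ t * P.Wl p) := mul_le_mul_of_nonneg_left ih zero_le
      _ = (ENNReal.ofReal P.γ) ^ (t + 1) * P.Wl p := by ring

/-- General occupation measure of a kernel. -/
def occK (κ' : Kernel ℝ ℝ) (p : Measure ℝ) : Measure ℝ :=
  Measure.sum fun t : ℕ => ENNReal.ofReal (P.β ^ t) • kerIter κ' t p

lemma occ_eq_occK (z : EReal) (p : Measure ℝ) : P.occ z p = P.occK (P.thrKer z) p := rfl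

lemma occM_eq_occK (z : EReal) (p : Measure ℝ) : P.occM z p = P.occK (P.thrKerM z) p := rfl

lemma Wl_occK_ne_top (κ' : Kernel ℝ ℝ) [IsSFiniteKernel κ']
    (hdrift : ∀ x, P.β * ∫ y, P.w y ∂κ' x ≤ P.γ * P.w x)
    (hint : ∀ x, Integrable P.w (κ' x)) (p : Measure ℝ) (hp : Integrable P.w p) :
    P.Wl (P.occK κ' p) ≠ ⊤ := by
  have hWp : P.Wl p ≠ ⊤ := by
    rw [Wl, ← ofReal_integral_eq_lintegral_ofReal hp (Filter.Eventually.of_forall P.w_nonneg)]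
    exact ENNReal.ofReal_ne_top
  have h1 : P.Wl (P.occK κ' p) ≤ (1 - ENNReal.ofReal P.γ)⁻¹ * P.Wl p := by
    rw [Wl, occK, lintegral_sum_measure]
    have hterm : ∀ t : ℕ, ∫⁻ x, ENNReal.ofReal (P.w x) ∂(ENNReal.ofReal (P.β ^ t) • kerIter κ' t p)
        = ENNReal.ofReal (P.β ^ t) * P.Wl (kerIter κ' t p) := fun t => lintegral_smul_measure _ _
    calc (∑' t : ℕ, ∫⁻ x, ENNReal.ofReal (P.w x) ∂(ENNReal.ofReal (P.β ^ t) • kerIter κ' t p))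
        ≤ ∑' t : ℕ, (ENNReal.ofReal P.γ) ^ t * P.Wl p := by
          refine ENNReal.tsum_le_tsum fun t => ?_
          rw [hterm t]
          exact P.Wl_iter κ' hdrift hint p t
      _ = (∑' t : ℕ, (ENNReal.ofReal P.γ) ^ t) * P.Wl p := ENNReal.tsum_mul_right
      _ = (1 - ENNReal.ofReal P.γ)⁻¹ * P.Wl p := by rw [ENNReal.tsum_geometric]
  refine ne_top_of_le_ne_top ?_ h1
  refine ENNReal.mul_ne_top ?_ hWp
  rw [ENNReal.inv_ne_top]
  intro h0
  rw [tsub_eq_zero_iff_le] at h0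
  exact absurd (lt_of_le_of_lt h0 (ENNReal.ofReal_lt_one.2 P.hγ1)) (lt_irrefl _)

end Bandit

/-- Bochner integral against a bound measure. -/
lemma integral_bind' (m : Measure ℝ) [SFinite m] (κ' : Kernel ℝ ℝ) [IsMarkovKernel κ']
    {u : ℝ → ℝ} (hu : Integrable u (m.bind (fun x => κ' x))) :
    ∫ y, u y ∂(m.bind fun x => κ' x) = ∫ x, ∫ y, u y ∂κ' x ∂m := by
  have h : m.bind (fun x => κ' x) = (m ⊗ₘ κ').map Prod.snd := by
    ext s hs
    rw [Measure.bind_apply hs (Kernel.measurable κ').aemeasurable, Measure.map_apply measurable_snd hs,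
      Measure.compProd_apply (measurable_snd hs)]
    rfl
  rw [h] at hu
  have hcomp : Integrable (fun yz : ℝ × ℝ => u yz.2) (m ⊗ₘ κ') :=
    (integrable_map_measure hu.aestronglyMeasurable measurable_snd.aemeasurable).1 hu
  rw [h, integral_map measurable_snd.aemeasurable hu.aestronglyMeasurable]
  exact Measure.integral_compProd hcomp

namespace Bandit

variable (P : Bandit)

/-- The key telescoping identity: if `D = u + β ∫ D dκ'` pointwise, then
`∫ D dp = ∫ u dμ` where `μ` is the occupation measure of `κ'`. -/
lemma key (κ' : Kernel ℝ ℝ) [IsMarkovKernel κ']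
    (hdrift : ∀ x, P.β * ∫ y, P.w y ∂κ' x ≤ P.γ * P.w x)
    (hint : ∀ x, Integrable P.w (κ' x))
    (p : Measure ℝ) (hp : P.IsInitDist p)
    (D u : ℝ → ℝ) (hDm : Measurable D) (hum : Measurable u)
    (CD Cu : ℝ) (hCD : ∀ x, |D x| ≤ CD * P.w x) (hCu : ∀ x, |u x| ≤ Cu * P.w x)
    (hrec : ∀ x, D x = u x + P.β * ∫ y, D y ∂κ' x) :
    ∫ x, D x ∂p = ∫ x, u x ∂(P.occK κ' p) := by
  haveI := hp.1
  by_cases hβ : P.β = 0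
  · have hocc : P.occK κ' p = p := by
      ext s hs
      rw [occK, Measure.sum_apply _ hs]
      rw [tsum_eq_single 0 (fun t ht => by simp [hβ, zero_pow ht])]
      simp [kerIter]
    rw [hocc]
    exact integral_congr_ae (Filter.Eventually.of_forall fun x => by rw [hrec x, hβ]; ring)
  replace hβ : 0 < P.β := lt_of_le_of_ne P.hβ0 (Ne.symm hβ)
  set m : ℕ → Measure ℝ := fun t => kerIter κ' t p with hm
  haveI hprob : ∀ t, IsProbabilityMeasure (m t) := fun t => kerIter_prob κ' t p
  have hwpos : ∀ x, (0:ℝ) ≤ P.w x := P.w_nonneg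
  have hWp : P.Wl p ≠ ⊤ := by
    rw [Wl, ← ofReal_integral_eq_lintegral_ofReal hp.2 (Filter.Eventually.of_forall hwpos)]
    exact ENNReal.ofReal_ne_top
  have hWt : ∀ t, P.Wl (m t) ≠ ⊤ := by
    intro t
    have h1 := P.Wl_iter κ' hdrift hint p t
    have h2 : (ENNReal.ofReal P.γ) ^ t * P.Wl p ≠ ⊤ :=
      ENNReal.mul_ne_top (ENNReal.pow_ne_top ENNReal.ofReal_ne_top) hWp
    have h3 : ENNReal.ofReal (P.β ^ t) * P.Wl (m t) ≠ ⊤ := ne_top_of_le_ne_top h2 h1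
    intro hcon
    rw [hcon, ENNReal.mul_top (by
      simp only [ne_eq, ENNReal.ofReal_eq_zero, not_le]
      exact pow_pos hβ t)] at h3
    exact h3 rfl
  have hDt : ∀ t, Integrable D (m t) := fun t =>
    P.integrable_of_wbound (hWt t) hDm.aestronglyMeasurable hCD
  have hut : ∀ t, Integrable u (m t) := fun t =>
    P.integrable_of_wbound (hWt t) hum.aestronglyMeasurable hCu
  have hwmt : ∀ t, Integrable P.w (m t) := fun t =>
    P.integrable_of_wbound (hWt t) P.hw_meas.aestronglyMeasurable
      (fun x => by rw [abs_of_nonneg (hwpos x), one_mul])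
  set K : ℝ → ℝ := fun x => (D x - u x) / P.β with hKdef
  have hKeq : ∀ x, ∫ y, D y ∂κ' x = K x := by
    intro x
    have := hrec x
    simp only [hKdef]
    field_simp
    linarith
  have hKm : Measurable K := (hDm.sub hum).div_const _
  have hCK : ∀ x, |K x| ≤ ((CD + Cu) / P.β) * P.w x := by
    intro x
    have hsub : |D x - u x| ≤ (CD + Cu) * P.w x := by
      calc |D x - u x| ≤ |D x| + |u x| := abs_sub _ _
        _ ≤ (CD + Cu) * P.w x := by linarith [hCD x, hCu x]
    calc |K x| = |D x - u x| / P.β := by rw [hKdef]; rw [abs_div, abs_of_pos hβ]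
      _ ≤ ((CD + Cu) * P.w x) / P.β := (div_le_div_iff_of_pos_right hβ).2 hsub
      _ = ((CD + Cu) / P.β) * P.w x := by ring
  have hKt : ∀ t, Integrable K (m t) := fun t =>
    P.integrable_of_wbound (hWt t) hKm.aestronglyMeasurable hCK
  have hstep : ∀ t, ∫ x, D x ∂m (t + 1) = ∫ x, K x ∂m t := by
    intro t
    have h1 : m (t + 1) = (m t).bind (fun x => κ' x) := rfl
    rw [h1, integral_bind' (m t) κ' (h1 ▸ hDt (t + 1))]
    exact integral_congr_ae (Filter.Eventually.of_forall fun x => hKeq x)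
  have hrecint : ∀ t, ∫ x, D x ∂m t = ∫ x, u x ∂m t + P.β * ∫ x, D x ∂m (t + 1) := by
    intro t
    rw [hstep t]
    calc ∫ x, D x ∂m t = ∫ x, (u x + P.β * K x) ∂m t :=
          integral_congr_ae (Filter.Eventually.of_forall fun x => by rw [hrec x, hKeq x])
      _ = (∫ x, u x ∂m t) + ∫ x, P.β * K x ∂m t := integral_add (hut t) ((hKt t).const_mul _)
      _ = (∫ x, u x ∂m t) + P.β * ∫ x, K x ∂m t := by rw [integral_const_mul]
  have htel : ∀ k, ∫ x, D x ∂p =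
      (∑ t ∈ Finset.range k, P.β ^ t * ∫ x, u x ∂m t) + P.β ^ k * ∫ x, D x ∂m k := by
    intro k
    induction k with
    | zero => simp [hm, kerIter]
    | succ k ih =>
      rw [ih, hrecint k, Finset.sum_range_succ]
      ring
  have hreal : ∀ t, P.β ^ t * ∫ x, P.w x ∂m t ≤ P.γ ^ t * ∫ x, P.w x ∂p := by
    intro t
    have h1 := P.Wl_iter κ' hdrift hint p t
    have e1 : P.Wl (m t) = ENNReal.ofReal (∫ x, P.w x ∂m t) :=
      (ofReal_integral_eq_lintegral_ofReal (hwmt t) (Filter.Eventually.of_forall hwpos)).symm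
    have e2 : P.Wl p = ENNReal.ofReal (∫ x, P.w x ∂p) :=
      (ofReal_integral_eq_lintegral_ofReal hp.2 (Filter.Eventually.of_forall hwpos)).symm
    rw [e1, e2, ← ENNReal.ofReal_mul (pow_nonneg P.hβ0 t), ← ENNReal.ofReal_pow P.γ_nonneg,
      ← ENNReal.ofReal_mul (pow_nonneg P.γ_nonneg t)] at h1
    exact (ENNReal.ofReal_le_ofReal_iff
      (mul_nonneg (pow_nonneg P.γ_nonneg t) (integral_nonneg hwpos))).1 h1
  have hwp0 : 0 ≤ ∫ x, P.w x ∂p := integral_nonneg hwpos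
  have habs : ∀ (h : ℝ → ℝ) (C : ℝ), 0 ≤ C → Measurable h → (∀ x, |h x| ≤ C * P.w x) →
      ∀ t, |∫ x, h x ∂m t| ≤ C * ∫ x, P.w x ∂m t := by
    intro h C hC0 hmeas hCh t
    have h2 : |∫ x, h x ∂m t| ≤ ∫ x, |h x| ∂m t := by
      simpa [Real.norm_eq_abs] using norm_integral_le_integral_norm (μ := m t) h
    have h3 : ∫ x, |h x| ∂m t ≤ ∫ x, C * P.w x ∂m t :=
      integral_mono (P.integrable_of_wbound (hWt t) hmeas.aestronglyMeasurable hCh).abs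
        ((hwmt t).const_mul C) hCh
    rw [integral_const_mul] at h3
    linarith
  have hCD0 : 0 ≤ CD := by
    have := (abs_nonneg (D 0)).trans (hCD 0)
    nlinarith [P.hw_one 0]
  have hCu0 : 0 ≤ Cu := by
    have := (abs_nonneg (u 0)).trans (hCu 0)
    nlinarith [P.hw_one 0]
  have hgeo : Tendsto (fun k : ℕ => P.γ ^ k) atTop (nhds 0) :=
    tendsto_pow_atTop_nhds_zero_of_lt_one P.γ_nonneg P.hγ1
  have htail : Tendsto (fun k => P.β ^ k * ∫ x, D x ∂m k) atTop (nhds 0) := by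
    refine squeeze_zero_norm (fun k => ?_) (by simpa using hgeo.const_mul (CD * ∫ x, P.w x ∂p))
    rw [Real.norm_eq_abs, abs_mul, abs_of_nonneg (pow_nonneg P.hβ0 k)]
    have h1 := habs D CD hCD0 hDm hCD k
    have h2 := hreal k
    have h3 : 0 ≤ ∫ x, P.w x ∂m k := integral_nonneg hwpos
    have hb0 : (0:ℝ) ≤ P.β ^ k := pow_nonneg P.hβ0 k
    calc P.β ^ k * |∫ x, D x ∂m k| ≤ P.β ^ k * (CD * ∫ x, P.w x ∂m k) :=
          mul_le_mul_of_nonneg_left h1 hb0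
      _ = CD * (P.β ^ k * ∫ x, P.w x ∂m k) := by ring
      _ ≤ CD * (P.γ ^ k * ∫ x, P.w x ∂p) := mul_le_mul_of_nonneg_left h2 hCD0
      _ = CD * (∫ x, P.w x ∂p) * P.γ ^ k := by ring
  have hS : Tendsto (fun k => ∑ t ∈ Finset.range k, P.β ^ t * ∫ x, u x ∂m t) atTop
      (nhds (∫ x, D x ∂p)) := by
    have heq : (fun k => ∑ t ∈ Finset.range k, P.β ^ t * ∫ x, u x ∂m t)
        = fun k => (∫ x, D x ∂p) - P.β ^ k * ∫ x, D x ∂m k := by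
      funext k
      linarith [htel k]
    rw [heq]
    simpa using tendsto_const_nhds.sub htail
  have hWocc := P.Wl_occK_ne_top κ' hdrift hint p hp.2
  have huμ : Integrable u (P.occK κ' p) :=
    P.integrable_of_wbound hWocc hum.aestronglyMeasurable hCu
  have hsum : ∫ x, u x ∂(P.occK κ' p)
      = ∑' t : ℕ, ∫ x, u x ∂(ENNReal.ofReal (P.β ^ t) • m t) := integral_sum_measure huμ
  have hterm : ∀ t : ℕ, ∫ x, u x ∂(ENNReal.ofReal (P.β ^ t) • m t) = P.β ^ t * ∫ x, u x ∂m t := by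
    intro t
    rw [integral_smul_measure, ENNReal.toReal_ofReal (pow_nonneg P.hβ0 t), smul_eq_mul]
  have hSummable : Summable (fun t => P.β ^ t * ∫ x, u x ∂m t) := by
    refine Summable.of_norm_bounded
      (((summable_geometric_of_lt_one P.γ_nonneg P.hγ1).mul_left (Cu * (∫ x, P.w x ∂p)))) (fun t => ?_)
    rw [Real.norm_eq_abs, abs_mul, abs_of_nonneg (pow_nonneg P.hβ0 t)]
    have h1 := habs u Cu hCu0 hum hCu t
    have h2 := hreal t
    have hb0 : (0:ℝ) ≤ P.β ^ t := pow_nonneg P.hβ0 t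
    calc P.β ^ t * |∫ x, u x ∂m t| ≤ P.β ^ t * (Cu * ∫ x, P.w x ∂m t) :=
          mul_le_mul_of_nonneg_left h1 hb0
      _ = Cu * (P.β ^ t * ∫ x, P.w x ∂m t) := by ring
      _ ≤ Cu * (P.γ ^ t * ∫ x, P.w x ∂p) := mul_le_mul_of_nonneg_left h2 hCu0
      _ = Cu * (∫ x, P.w x ∂p) * P.γ ^ t := by ring
  have huniq : ∑' t : ℕ, P.β ^ t * ∫ x, u x ∂m t = ∫ x, D x ∂p :=
    tendsto_nhds_unique hSummable.hasSum.tendsto_sum_nat hS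
  rw [hsum, tsum_congr hterm, huniq]

end Bandit

end Aux2


section Aux3

namespace Bandit

variable (P : Bandit)

lemma integral_GG_sub (a : Bool) (x : ℝ) (z₁ z₂ : EReal) :
    ∫ y, (P.G y z₁ - P.G y z₂) ∂P.κ a x
      = (∫ y, P.G y z₁ ∂P.κ a x) - ∫ y, P.G y z₂ ∂P.κ a x :=
  integral_sub (P.integrable_G_kernel a x z₁) (P.integrable_G_kernel a x z₂)

lemma integral_GGm_sub (a : Bool) (x : ℝ) (z₁ z₂ : EReal) :
    ∫ y, (P.G y z₁ - P.Gm y z₂) ∂P.κ a x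
      = (∫ y, P.G y z₁ ∂P.κ a x) - ∫ y, P.Gm y z₂ ∂P.κ a x :=
  integral_sub (P.integrable_G_kernel a x z₁) (P.integrable_Gm_kernel a x z₂)

lemma integral_GmG_sub (a : Bool) (x : ℝ) (z₁ z₂ : EReal) :
    ∫ y, (P.Gm y z₁ - P.G y z₂) ∂P.κ a x
      = (∫ y, P.Gm y z₁ ∂P.κ a x) - ∫ y, P.G y z₂ ∂P.κ a x :=
  integral_sub (P.integrable_Gm_kernel a x z₁) (P.integrable_G_kernel a x z₂)

lemma recG_low (z₁ z₂ : EReal) (h12 : z₁ ≤ z₂) (x : ℝ) :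
    P.G x z₁ - P.G x z₂ = Set.indicator (iocR z₁ z₂) (fun y => P.g y z₂) x
      + P.β * ∫ y, (P.G y z₁ - P.G y z₂) ∂P.thrKer z₁ x := by
  rw [P.thrKer_apply]
  by_cases h1 : z₁ < (x : EReal)
  · by_cases h2 : z₂ < (x : EReal)
    · have hx : x ∉ iocR z₁ z₂ := fun hx => absurd hx.2 (not_le.2 h2)
      rw [Set.indicator_of_notMem hx, P.hG_eq x z₁, P.hG_eq x z₂,
        decide_eq_true h1, decide_eq_true h2, P.integral_GG_sub]
      ring
    · have hx : x ∈ iocR z₁ z₂ := ⟨h1, not_lt.1 h2⟩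
      rw [Set.indicator_of_mem hx, P.hG_eq x z₁, P.hG_eq x z₂,
        decide_eq_true h1, decide_eq_false h2, P.integral_GG_sub]
      simp only [Bandit.g]
      ring
  · have h2 : ¬ z₂ < (x : EReal) := fun h => h1 (lt_of_le_of_lt h12 h)
    have hx : x ∉ iocR z₁ z₂ := fun hx => h1 hx.1
    rw [Set.indicator_of_notMem hx, P.hG_eq x z₁, P.hG_eq x z₂,
      decide_eq_false h1, decide_eq_false h2, P.integral_GG_sub]
    ring

lemma recG_high (z₁ z₂ : EReal) (h12 : z₁ ≤ z₂) (x : ℝ) :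
    P.G x z₁ - P.G x z₂ = Set.indicator (iocR z₁ z₂) (fun y => P.g y z₁) x
      + P.β * ∫ y, (P.G y z₁ - P.G y z₂) ∂P.thrKer z₂ x := by
  rw [P.thrKer_apply]
  by_cases h2 : z₂ < (x : EReal)
  · have h1 : z₁ < (x : EReal) := lt_of_le_of_lt h12 h2
    have hx : x ∉ iocR z₁ z₂ := fun hx => absurd hx.2 (not_le.2 h2)
    rw [Set.indicator_of_notMem hx, P.hG_eq x z₁, P.hG_eq x z₂,
      decide_eq_true h1, decide_eq_true h2, P.integral_GG_sub]
    ring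
  · by_cases h1 : z₁ < (x : EReal)
    · have hx : x ∈ iocR z₁ z₂ := ⟨h1, not_lt.1 h2⟩
      rw [Set.indicator_of_mem hx, P.hG_eq x z₁, P.hG_eq x z₂,
        decide_eq_true h1, decide_eq_false h2, P.integral_GG_sub]
      simp only [Bandit.g]
      ring
    · have hx : x ∉ iocR z₁ z₂ := fun hx => h1 hx.1
      rw [Set.indicator_of_notMem hx, P.hG_eq x z₁, P.hG_eq x z₂,
        decide_eq_false h1, decide_eq_false h2, P.integral_GG_sub]
      ring

lemma recGm_left (z' : EReal) (z : ℝ) (h : z' < (z : EReal)) (x : ℝ) :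
    P.G x z' - P.Gm x (z : EReal)
      = Set.indicator {y : ℝ | z' < (y : EReal) ∧ (y : EReal) < (z : EReal)}
          (fun y => P.g y z') x
      + P.β * ∫ y, (P.G y z' - P.Gm y (z : EReal)) ∂P.thrKerM (z : EReal) x := by
  rw [P.thrKerM_apply]
  by_cases hz : (z : EReal) ≤ (x : EReal)
  · have h1 : z' < (x : EReal) := lt_of_lt_of_le h hz
    have hx : x ∉ {y : ℝ | z' < (y : EReal) ∧ (y : EReal) < (z : EReal)} :=
      fun hx => absurd hx.2 (not_lt.2 hz)
    rw [Set.indicator_of_notMem hx, P.hG_eq x z', P.hGm_eq x (z : EReal),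
      decide_eq_true h1, decide_eq_true hz, P.integral_GGm_sub]
    ring
  · by_cases h1 : z' < (x : EReal)
    · have hx : x ∈ {y : ℝ | z' < (y : EReal) ∧ (y : EReal) < (z : EReal)} :=
        ⟨h1, not_le.1 hz⟩
      rw [Set.indicator_of_mem hx, P.hG_eq x z', P.hGm_eq x (z : EReal),
        decide_eq_true h1, decide_eq_false hz, P.integral_GGm_sub]
      simp only [Bandit.g]
      ring
    · have hx : x ∉ {y : ℝ | z' < (y : EReal) ∧ (y : EReal) < (z : EReal)} :=
        fun hx => h1 hx.1
      rw [Set.indicator_of_notMem hx, P.hG_eq x z', P.hGm_eq x (z : EReal),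
        decide_eq_false h1, decide_eq_false hz, P.integral_GGm_sub]
      ring

lemma recGm_jump (z : ℝ) (x : ℝ) :
    P.Gm x (z : EReal) - P.G x (z : EReal)
      = Set.indicator {(z : ℝ)} (fun _ => P.g z (z : EReal)) x
      + P.β * ∫ y, (P.Gm y (z : EReal) - P.G y (z : EReal)) ∂P.thrKerM (z : EReal) x := by
  rw [P.thrKerM_apply]
  rcases lt_trichotomy x z with hlt | heq | hgt
  · have h1 : ¬ (z : EReal) ≤ (x : EReal) := not_le.2 (EReal.coe_lt_coe_iff.2 hlt)
    have h2 : ¬ (z : EReal) < (x : EReal) := fun h => h1 (le_of_lt h)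
    have hx : x ∉ ({(z : ℝ)} : Set ℝ) := by simp [ne_of_lt hlt]
    rw [Set.indicator_of_notMem hx, P.hGm_eq x (z : EReal), P.hG_eq x (z : EReal),
      decide_eq_false h1, decide_eq_false h2, P.integral_GmG_sub]
    ring
  · subst heq
    have h1 : (x : EReal) ≤ (x : EReal) := le_refl _
    have h2 : ¬ (x : EReal) < (x : EReal) := lt_irrefl _
    have hx : x ∈ ({(x : ℝ)} : Set ℝ) := rfl
    rw [Set.indicator_of_mem hx, P.hGm_eq x (x : EReal), P.hG_eq x (x : EReal),
      decide_eq_true h1, decide_eq_false h2, P.integral_GmG_sub]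
    simp only [Bandit.g]
    ring
  · have h1 : (z : EReal) ≤ (x : EReal) := le_of_lt (EReal.coe_lt_coe_iff.2 hgt)
    have h2 : (z : EReal) < (x : EReal) := EReal.coe_lt_coe_iff.2 hgt
    have hx : x ∉ ({(z : ℝ)} : Set ℝ) := by simp [ne_of_gt hgt]
    rw [Set.indicator_of_notMem hx, P.hGm_eq x (z : EReal), P.hG_eq x (z : EReal),
      decide_eq_true h1, decide_eq_true h2, P.integral_GmG_sub]
    ring

end Bandit

end Aux3


section Aux4

open ENNReal Filter

namespace Bandit

variable (P : Bandit)

lemma thrKer_drift (z : EReal) (x : ℝ) : P.β * ∫ y, P.w y ∂P.thrKer z x ≤ P.γ * P.w x := by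
  rw [P.thrKer_apply]; exact P.hw_drift _ x

lemma thrKer_wint (z : EReal) (x : ℝ) : Integrable P.w (P.thrKer z x) := by
  rw [P.thrKer_apply]; exact P.hw_int _ x

lemma thrKerM_drift (z : EReal) (x : ℝ) : P.β * ∫ y, P.w y ∂P.thrKerM z x ≤ P.γ * P.w x := by
  rw [P.thrKerM_apply]; exact P.hw_drift _ x

lemma thrKerM_wint (z : EReal) (x : ℝ) : Integrable P.w (P.thrKerM z x) := by
  rw [P.thrKerM_apply]; exact P.hw_int _ x

lemma iocR_coe (z z' : ℝ) : iocR (z : EReal) (z' : EReal) = Set.Ioc z z' := by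
  ext y
  simp [iocR, Set.mem_Ioc, EReal.coe_lt_coe_iff, EReal.coe_le_coe_iff]

lemma iooR_coe (z z' : ℝ) :
    {y : ℝ | (z : EReal) < (y : EReal) ∧ (y : EReal) < (z' : EReal)} = Set.Ioo z z' := by
  ext y
  simp [Set.mem_Ioo, EReal.coe_lt_coe_iff]

lemma G_diff_bound (z₁ z₂ : EReal) (x : ℝ) :
    |P.G x z₁ - P.G x z₂| ≤ (2 * (P.M / (1 - P.γ))) * P.w x := by
  have h1 := P.G_bound x z₁; have h2 := P.G_bound x z₂
  calc |P.G x z₁ - P.G x z₂| ≤ |P.G x z₁| + |P.G x z₂| := abs_sub _ _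
    _ ≤ (2 * (P.M / (1 - P.γ))) * P.w x := by linarith

lemma GGm_diff_bound (z₁ z₂ : EReal) (x : ℝ) :
    |P.G x z₁ - P.Gm x z₂| ≤ (2 * (P.M / (1 - P.γ))) * P.w x := by
  have h1 := P.G_bound x z₁; have h2 := P.Gm_bound x z₂
  calc |P.G x z₁ - P.Gm x z₂| ≤ |P.G x z₁| + |P.Gm x z₂| := abs_sub _ _
    _ ≤ (2 * (P.M / (1 - P.γ))) * P.w x := by linarith

lemma GmG_diff_bound (z₁ z₂ : EReal) (x : ℝ) :
    |P.Gm x z₁ - P.G x z₂| ≤ (2 * (P.M / (1 - P.γ))) * P.w x := by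
  have h1 := P.Gm_bound x z₁; have h2 := P.G_bound x z₂
  calc |P.Gm x z₁ - P.G x z₂| ≤ |P.Gm x z₁| + |P.G x z₂| := abs_sub _ _
    _ ≤ (2 * (P.M / (1 - P.γ))) * P.w x := by linarith

lemma indicator_g_bound (s : Set ℝ) (ζ : EReal) (x : ℝ) :
    |Set.indicator s (fun y => P.g y ζ) x| ≤ P.Cg * P.w x := by
  by_cases hx : x ∈ s
  · rw [Set.indicator_of_mem hx]; exact P.g_bound x ζ
  · rw [Set.indicator_of_notMem hx, abs_zero]
    exact mul_nonneg P.Cg_nonneg (P.w_nonneg x)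

lemma Wl_p_ne_top {μ : Measure ℝ} (h : Integrable P.w μ) : P.Wl μ ≠ ⊤ := by
  rw [Wl, ← ofReal_integral_eq_lintegral_ofReal h (Filter.Eventually.of_forall P.w_nonneg)]
  exact ENNReal.ofReal_ne_top

lemma integrable_G_p {p : Measure ℝ} (hp : P.IsInitDist p) (z : EReal) :
    Integrable (fun x => P.G x z) p :=
  P.integrable_of_wbound (P.Wl_p_ne_top hp.2) (P.hG_meas z).aestronglyMeasurable
    (fun x => P.G_bound x z)

lemma integrable_Gm_p {p : Measure ℝ} (hp : P.IsInitDist p) (z : EReal) :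
    Integrable (fun x => P.Gm x z) p :=
  P.integrable_of_wbound (P.Wl_p_ne_top hp.2) (P.hGm_meas z).aestronglyMeasurable
    (fun x => P.Gm_bound x z)

lemma Gp_right_formula {p : Measure ℝ} (hp : P.IsInitDist p) (z z' : ℝ) (h : z ≤ z') :
    P.Gp p (z : EReal) - P.Gp p (z' : EReal)
      = ∫ x, Set.indicator (Set.Ioc z z') (fun y => P.g y (z' : EReal)) x ∂(P.occ (z : EReal) p) := by
  have hsub : P.Gp p (z : EReal) - P.Gp p (z' : EReal)
      = ∫ x, (P.G x (z : EReal) - P.G x (z' : EReal)) ∂p := by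
    rw [Gp, Gp, integral_sub (P.integrable_G_p hp _) (P.integrable_G_p hp _)]
  rw [hsub, P.occ_eq_occK]
  refine P.key (P.thrKer (z : EReal)) (P.thrKer_drift _) (P.thrKer_wint _) p hp _ _
    ((P.hG_meas _).sub (P.hG_meas _))
    ((P.g_meas _).indicator measurableSet_Ioc)
    (2 * (P.M / (1 - P.γ))) P.Cg (P.G_diff_bound _ _) (P.indicator_g_bound _ _)
    (fun x => ?_)
  have := P.recG_low (z : EReal) (z' : EReal) (EReal.coe_le_coe_iff.2 h) x
  rwa [iocR_coe] at this

lemma Gp_left_formula {p : Measure ℝ} (hp : P.IsInitDist p) (z' z : ℝ) (h : z' ≤ z) :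
    P.Gp p (z' : EReal) - P.Gp p (z : EReal)
      = ∫ x, Set.indicator (Set.Ioc z' z) (fun y => P.g y (z' : EReal)) x ∂(P.occ (z : EReal) p) := by
  have hsub : P.Gp p (z' : EReal) - P.Gp p (z : EReal)
      = ∫ x, (P.G x (z' : EReal) - P.G x (z : EReal)) ∂p := by
    rw [Gp, Gp, integral_sub (P.integrable_G_p hp _) (P.integrable_G_p hp _)]
  rw [hsub, P.occ_eq_occK]
  refine P.key (P.thrKer (z : EReal)) (P.thrKer_drift _) (P.thrKer_wint _) p hp _ _
    ((P.hG_meas _).sub (P.hG_meas _))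
    ((P.g_meas _).indicator measurableSet_Ioc)
    (2 * (P.M / (1 - P.γ))) P.Cg (P.G_diff_bound _ _) (P.indicator_g_bound _ _)
    (fun x => ?_)
  have := P.recG_high (z' : EReal) (z : EReal) (EReal.coe_le_coe_iff.2 h) x
  rwa [iocR_coe] at this

lemma GpM_formula {p : Measure ℝ} (hp : P.IsInitDist p) (z' z : ℝ) (h : z' < z) :
    P.Gp p (z' : EReal) - P.Gmp p (z : EReal)
      = ∫ x, Set.indicator (Set.Ioo z' z) (fun y => P.g y (z' : EReal)) x ∂(P.occM (z : EReal) p) := by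
  have hsub : P.Gp p (z' : EReal) - P.Gmp p (z : EReal)
      = ∫ x, (P.G x (z' : EReal) - P.Gm x (z : EReal)) ∂p := by
    rw [Gp, Gmp, integral_sub (P.integrable_G_p hp _) (P.integrable_Gm_p hp _)]
  rw [hsub, P.occM_eq_occK]
  refine P.key (P.thrKerM (z : EReal)) (P.thrKerM_drift _) (P.thrKerM_wint _) p hp _ _
    ((P.hG_meas _).sub (P.hGm_meas _))
    ((P.g_meas _).indicator measurableSet_Ioo)
    (2 * (P.M / (1 - P.γ))) P.Cg (P.GGm_diff_bound _ _) (P.indicator_g_bound _ _)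
    (fun x => ?_)
  have := P.recGm_left (z' : EReal) z (EReal.coe_lt_coe_iff.2 h) x
  rwa [iooR_coe] at this

lemma jump_formula {p : Measure ℝ} (hp : P.IsInitDist p) (z : ℝ) :
    P.Gmp p (z : EReal) - P.Gp p (z : EReal)
      = P.g z (z : EReal) * (P.occM (z : EReal) p {z}).toReal := by
  have hsub : P.Gmp p (z : EReal) - P.Gp p (z : EReal)
      = ∫ x, (P.Gm x (z : EReal) - P.G x (z : EReal)) ∂p := by
    rw [Gp, Gmp, integral_sub (P.integrable_Gm_p hp _) (P.integrable_G_p hp _)]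
  have hCu : ∀ x, |Set.indicator {(z : ℝ)} (fun _ => P.g z (z : EReal)) x|
      ≤ |P.g z (z : EReal)| * P.w x := by
    intro x
    by_cases hx : x ∈ ({(z : ℝ)} : Set ℝ)
    · rw [Set.indicator_of_mem hx]
      exact le_mul_of_one_le_right (abs_nonneg _) (P.hw_one x)
    · rw [Set.indicator_of_notMem hx, abs_zero]
      exact mul_nonneg (abs_nonneg _) (P.w_nonneg x)
  have hkey := P.key (P.thrKerM (z : EReal)) (P.thrKerM_drift _) (P.thrKerM_wint _) p hp
    (fun x => P.Gm x (z : EReal) - P.G x (z : EReal))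
    (Set.indicator {(z : ℝ)} (fun _ => P.g z (z : EReal)))
    ((P.hGm_meas _).sub (P.hG_meas _))
    (measurable_const.indicator (measurableSet_singleton z))
    (2 * (P.M / (1 - P.γ))) (|P.g z (z : EReal)|) (P.GmG_diff_bound _ _) hCu
    (fun x => P.recGm_jump z x)
  rw [hsub, hkey, ← P.occM_eq_occK,
    integral_indicator_const (P.g z (z : EReal)) (measurableSet_singleton z), smul_eq_mul,
    mul_comm]
  rfl

/-- The weighted occupation measure is finite and bounds give an interval estimate. -/
lemma integral_indicator_le (μ : Measure ℝ) (hW : P.Wl μ ≠ ⊤) {s : Set ℝ}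
    (hs : MeasurableSet s) (ζ : EReal) :
    |∫ x, Set.indicator s (fun y => P.g y ζ) x ∂μ|
      ≤ P.Cg * ((μ.withDensity fun x => ENNReal.ofReal (P.w x)) s).toReal := by
  have hwint : Integrable P.w μ :=
    P.integrable_of_wbound hW P.hw_meas.aestronglyMeasurable
      (fun x => by rw [abs_of_nonneg (P.w_nonneg x), one_mul])
  have hu_int : Integrable (Set.indicator s (fun y => P.g y ζ)) μ :=
    P.integrable_of_wbound hW ((P.g_meas ζ).indicator hs).aestronglyMeasurable
      (P.indicator_g_bound s ζ)
  have h1 : |∫ x, Set.indicator s (fun y => P.g y ζ) x ∂μ|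
      ≤ ∫ x, |Set.indicator s (fun y => P.g y ζ) x| ∂μ := by
    simpa [Real.norm_eq_abs] using
      norm_integral_le_integral_norm (μ := μ) (Set.indicator s (fun y => P.g y ζ))
  have h2 : ∫ x, |Set.indicator s (fun y => P.g y ζ) x| ∂μ
      ≤ ∫ x, Set.indicator s (fun y => P.Cg * P.w y) x ∂μ := by
    refine integral_mono hu_int.abs (((hwint.const_mul P.Cg).indicator hs)) (fun x => ?_)
    by_cases hx : x ∈ s
    · rw [Set.indicator_of_mem hx, Set.indicator_of_mem hx]; exact P.g_bound x ζ
    · rw [Set.indicator_of_notMem hx, Set.indicator_of_notMem hx, abs_zero]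
  have h3 : ∫ x, Set.indicator s (fun y => P.Cg * P.w y) x ∂μ = P.Cg * ∫ x in s, P.w x ∂μ := by
    rw [integral_indicator hs, integral_const_mul]
  have h4 : ∫ x in s, P.w x ∂μ
      = ((μ.withDensity fun x => ENNReal.ofReal (P.w x)) s).toReal := by
    rw [withDensity_apply _ hs]
    rw [integral_eq_lintegral_of_nonneg_ae (Filter.Eventually.of_forall P.w_nonneg)
      P.hw_meas.aestronglyMeasurable.restrict]
  calc |∫ x, Set.indicator s (fun y => P.g y ζ) x ∂μ|
      ≤ ∫ x, Set.indicator s (fun y => P.Cg * P.w y) x ∂μ := h1.trans h2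
    _ = P.Cg * ((μ.withDensity fun x => ENNReal.ofReal (P.w x)) s).toReal := by rw [h3, h4]

lemma kernel_agree (z : ℝ) (x : ℝ) (hx : x ≠ z) :
    P.thrKer (z : EReal) x = P.thrKerM (z : EReal) x := by
  rw [P.thrKer_apply, P.thrKerM_apply]
  rcases lt_or_gt_of_ne hx with h | h
  · have hnlt : ¬ (z : EReal) < (x : EReal) :=
      fun hc => absurd (EReal.coe_lt_coe_iff.1 hc) (not_lt.2 (le_of_lt h))
    have hnle : ¬ (z : EReal) ≤ (x : EReal) :=
      fun hc => absurd (EReal.coe_le_coe_iff.1 hc) (not_le.2 h)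
    rw [decide_eq_false hnlt, decide_eq_false hnle]
  · rw [decide_eq_true (EReal.coe_lt_coe_iff.2 h),
      decide_eq_true (le_of_lt (EReal.coe_lt_coe_iff.2 h))]

lemma iter_agree (z : ℝ) (p : Measure ℝ) (t : ℕ)
    (h0 : ∀ s < t, kerIter (P.thrKer (z : EReal)) s p {z} = 0) :
    kerIter (P.thrKerM (z : EReal)) t p = kerIter (P.thrKer (z : EReal)) t p := by
  induction t with
  | zero => rfl
  | succ t ih =>
    have heq := ih (fun s hs => h0 s (Nat.lt_succ_of_lt hs))
    have hzero : (kerIter (P.thrKer (z : EReal)) t p) {z} = 0 := h0 t (Nat.lt_succ_self t)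
    rw [kerIter_succ, kerIter_succ, heq]
    ext s hs
    rw [Measure.bind_apply hs (Kernel.measurable _).aemeasurable, Measure.bind_apply hs (Kernel.measurable _).aemeasurable]
    refine lintegral_congr_ae ?_
    have hae : ∀ᵐ x ∂(kerIter (P.thrKer (z : EReal)) t p), x ≠ z := by
      rw [ae_iff]
      have hset : {x : ℝ | ¬ x ≠ z} = {z} := by ext y; simp
      rw [hset]
      exact hzero
    filter_upwards [hae] with x hx
    rw [P.kernel_agree z x hx]

lemma chargeM (z : ℝ) (p : Measure ℝ) (hc : 0 < P.occ (z : EReal) p {z}) :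
    0 < P.occM (z : EReal) p {z} := by
  have hms : MeasurableSet ({z} : Set ℝ) := measurableSet_singleton z
  rw [occ, Measure.sum_apply _ hms] at hc
  obtain ⟨t₀, ht₀⟩ : ∃ t, (ENNReal.ofReal (P.β ^ t) • kerIter (P.thrKer (z : EReal)) t p) {z} ≠ 0 := by
    by_contra hall
    push_neg at hall
    rw [ENNReal.tsum_eq_zero.2 hall] at hc
    exact lt_irrefl _ hc
  rw [Measure.smul_apply, smul_eq_mul] at ht₀
  have hb0 : ENNReal.ofReal (P.β ^ t₀) ≠ 0 := fun h => ht₀ (by rw [h, zero_mul])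
  have hm0 : kerIter (P.thrKer (z : EReal)) t₀ p {z} ≠ 0 := fun h => ht₀ (by rw [h, mul_zero])
  have hex : ∃ t, kerIter (P.thrKer (z : EReal)) t p {z} ≠ 0 := ⟨t₀, hm0⟩
  set T := Nat.find hex with hT
  have hTspec := Nat.find_spec hex
  have hTmin : ∀ s < T, kerIter (P.thrKer (z : EReal)) s p {z} = 0 := fun s hs =>
    not_not.1 (Nat.find_min hex hs)
  have hTle : T ≤ t₀ := Nat.find_min' hex hm0
  have hβT : ENNReal.ofReal (P.β ^ T) ≠ 0 := by
    rcases eq_or_lt_of_le P.hβ0 with hβz | hβpos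
    · have ht00 : t₀ = 0 := by
        by_contra hne
        rw [← hβz, zero_pow hne, ENNReal.ofReal_zero] at hb0
        exact hb0 rfl
      have : T = 0 := le_antisymm (ht00 ▸ hTle) (Nat.zero_le _)
      rw [this, pow_zero, ENNReal.ofReal_one]
      exact one_ne_zero
    · exact ne_of_gt (ENNReal.ofReal_pos.2 (pow_pos hβpos T))
  have hMeq := P.iter_agree z p T hTmin
  have hpos : 0 < (ENNReal.ofReal (P.β ^ T) • kerIter (P.thrKerM (z : EReal)) T p) {z} := by
    rw [Measure.smul_apply, smul_eq_mul, hMeq]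
    exact ENNReal.mul_pos hβT hTspec
  exact lt_of_lt_of_le hpos
    (Measure.le_iff'.1 (Measure.le_sum
      (fun t => ENNReal.ofReal (P.β ^ t) • kerIter (P.thrKerM (z : EReal)) t p) T) {z})

end Bandit

/-- shrinking measure along a decreasing family. -/
lemma measure_shrink (ρ : Measure ℝ) [IsFiniteMeasure ρ] (E : ℕ → Set ℝ)
    (hmeas : ∀ n, MeasurableSet (E n)) (hanti : Antitone E) (h0 : ρ (⋂ n, E n) = 0)
    (ε : ℝ) (hε : 0 < ε) : ∃ N, ρ (E N) < ENNReal.ofReal ε := by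
  have ht : Tendsto (fun n => ρ (E n)) atTop (𝓝 (ρ (⋂ n, E n))) :=
    tendsto_measure_iInter_atTop (fun n => (hmeas n).nullMeasurableSet) hanti
      ⟨0, measure_ne_top ρ _⟩
  rw [h0] at ht
  exact (ht.eventually_lt_const (ENNReal.ofReal_pos.2 hε)).exists

end Aux4


section Aux5

open Filter

lemma antitoneIoc (z : ℝ) :
    Antitone (fun n : ℕ => Set.Ioc (z - 1/(n+1)) (z + 1/(n+1))) := by
  intro m n hmn
  have hm : (0:ℝ) < m + 1 := by positivity
  have h : (1:ℝ)/(n+1) ≤ 1/(m+1) := by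
    apply one_div_le_one_div_of_le hm
    have : (m:ℝ) ≤ n := Nat.cast_le.2 hmn
    linarith
  exact Set.Ioc_subset_Ioc (by linarith) (by linarith)

lemma antitoneIoo (z : ℝ) : Antitone (fun n : ℕ => Set.Ioo (z - 1/(n+1)) z) := by
  intro m n hmn
  have hm : (0:ℝ) < m + 1 := by positivity
  have h : (1:ℝ)/(n+1) ≤ 1/(m+1) := by
    apply one_div_le_one_div_of_le hm
    have : (m:ℝ) ≤ n := Nat.cast_le.2 hmn
    linarith
  exact Set.Ioo_subset_Ioo (by linarith) le_rfl

lemma iInterIoc (z : ℝ) : (⋂ n : ℕ, Set.Ioc (z - 1/(n+1)) (z + 1/(n+1))) = {z} := by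
  ext y
  simp only [Set.mem_iInter, Set.mem_Ioc, Set.mem_singleton_iff]
  constructor
  · intro h
    have h1 : y ≤ z := by
      by_contra hc
      push_neg at hc
      obtain ⟨n, hn⟩ := exists_nat_one_div_lt (sub_pos.2 hc)
      exact absurd (h n).2 (not_le.2 (by linarith))
    have h2 : z ≤ y := by
      by_contra hc
      push_neg at hc
      obtain ⟨n, hn⟩ := exists_nat_one_div_lt (sub_pos.2 hc)
      exact absurd (h n).1 (not_lt.2 (by linarith))
    exact le_antisymm h1 h2
  · rintro rfl n
    have : (0:ℝ) < 1/(n+1) := by positivity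
    constructor <;> linarith

lemma iInterIoo (z : ℝ) : (⋂ n : ℕ, Set.Ioo (z - 1/(n+1)) z) = (∅ : Set ℝ) := by
  ext y
  simp only [Set.mem_iInter, Set.mem_Ioo, Set.mem_empty_iff_false, iff_false]
  intro h
  obtain ⟨n, hn⟩ := exists_nat_one_div_lt (sub_pos.2 (h 0).2)
  linarith [(h n).1]

lemma eps_chain {Cg t1 t2 ε : ℝ} (hC : 0 ≤ Cg) (h12 : t1 ≤ t2) (h2 : t2 < ε / (Cg + 1))
    (ht2 : 0 ≤ t2) : Cg * t1 < ε := by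
  have hCg1 : 0 < Cg + 1 := by linarith
  have e1 : Cg * t1 ≤ Cg * t2 := mul_le_mul_of_nonneg_left h12 hC
  have e2 : Cg * t2 ≤ (Cg + 1) * t2 := by nlinarith
  have e3 : (Cg + 1) * t2 < (Cg + 1) * (ε / (Cg + 1)) := mul_lt_mul_of_pos_left h2 hCg1
  have e4 : (Cg + 1) * (ε / (Cg + 1)) = ε := by field_simp
  linarith

end Aux5

/-- Under (PCLI1), `G(p,·)` is discontinuous at `z` iff the occupation measure
`μ_p^z` of the `z`-policy charges `{z}`. -/
theorem resource_metric_discontinuous_iff (P : Bandit) (h1 : P.PCLI1)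
    (p : Measure ℝ) (hp : P.IsInitDist p) (z : ℝ) :
    ¬ ContinuousAt (fun z' : ℝ => P.Gp p z') z ↔ 0 < P.occ z p {z} := by
  haveI := hp.1
  constructor
  · -- discontinuous → positive mass, by contraposition
    intro hdis
    by_contra hzero
    apply hdis
    have hz0 : P.occ (z : EReal) p {z} = 0 := by
      rcases eq_or_lt_of_le (zero_le : 0 ≤ P.occ (z : EReal) p {z}) with h | h
      · exact h.symm
      · exact absurd h hzero
    -- continuity at z
    have hWμ : P.Wl (P.occ (z : EReal) p) ≠ ⊤ := by
      rw [P.occ_eq_occK]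
      exact P.Wl_occK_ne_top _ (P.thrKer_drift _) (P.thrKer_wint _) p hp.2
    set ρ := (P.occ (z : EReal) p).withDensity (fun x => ENNReal.ofReal (P.w x)) with hρ
    haveI : IsFiniteMeasure ρ := by
      constructor
      rw [hρ, withDensity_apply _ MeasurableSet.univ, Measure.restrict_univ]
      exact lt_top_iff_ne_top.2 hWμ
    have hρz : ρ {z} = 0 := by
      rw [hρ, withDensity_apply _ (measurableSet_singleton z), lintegral_singleton, hz0, mul_zero]
    rw [Metric.continuousAt_iff]
    intro ε hε
    have hCg1 : 0 < P.Cg + 1 := by linarith [P.Cg_nonneg]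
    obtain ⟨N, hN⟩ := measure_shrink ρ (fun n : ℕ => Set.Ioc (z - 1/(n+1)) (z + 1/(n+1)))
      (fun n => measurableSet_Ioc) (antitoneIoc z)
      (by rw [iInterIoc z]; exact hρz) (ε / (P.Cg + 1)) (div_pos hε hCg1)
    have hδpos : (0:ℝ) < 1/(N+1) := by positivity
    refine ⟨1/(N+1), hδpos, fun x hx => ?_⟩
    rw [Real.dist_eq] at hx
    simp only [Real.dist_eq]
    have habs := abs_lt.1 hx
    have hEfin : ρ (Set.Ioc (z - 1/(N+1)) (z + 1/(N+1))) ≠ ⊤ := measure_ne_top ρ _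
    have hEN : (ρ (Set.Ioc (z - 1/(N+1)) (z + 1/(N+1)))).toReal < ε / (P.Cg + 1) :=
      ENNReal.toReal_lt_of_lt_ofReal hN
    have htR0 : 0 ≤ (ρ (Set.Ioc (z - 1/(N+1)) (z + 1/(N+1)))).toReal := ENNReal.toReal_nonneg
    rcases le_or_gt z x with hzx | hxz
    · have hform := P.Gp_right_formula hp z x hzx
      have hb := P.integral_indicator_le (P.occ (z : EReal) p) hWμ
        (measurableSet_Ioc (a := z) (b := x)) (x : EReal)
      rw [← hform] at hb
      have hsubset : Set.Ioc z x ⊆ Set.Ioc (z - 1/(N+1)) (z + 1/(N+1)) := by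
        intro y hy
        constructor
        · linarith [hy.1]
        · linarith [hy.2, habs.2]
      have hmono : (ρ (Set.Ioc z x)).toReal
          ≤ (ρ (Set.Ioc (z - 1/(N+1)) (z + 1/(N+1)))).toReal :=
        ENNReal.toReal_mono hEfin (measure_mono hsubset)
      rw [abs_sub_comm]
      have h0le : 0 ≤ (ρ (Set.Ioc z x)).toReal := ENNReal.toReal_nonneg
      calc |P.Gp p (z:EReal) - P.Gp p (x:EReal)| ≤ P.Cg * (ρ (Set.Ioc z x)).toReal := by
            rw [hρ]; exact hb
        _ < ε := eps_chain P.Cg_nonneg hmono hEN htR0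
    · have hform := P.Gp_left_formula hp x z (le_of_lt hxz)
      have hb := P.integral_indicator_le (P.occ (z : EReal) p) hWμ
        (measurableSet_Ioc (a := x) (b := z)) (x : EReal)
      rw [← hform] at hb
      have hsubset : Set.Ioc x z ⊆ Set.Ioc (z - 1/(N+1)) (z + 1/(N+1)) := by
        intro y hy
        constructor
        · linarith [hy.1, habs.1]
        · linarith [hy.2]
      have hmono : (ρ (Set.Ioc x z)).toReal
          ≤ (ρ (Set.Ioc (z - 1/(N+1)) (z + 1/(N+1)))).toReal :=
        ENNReal.toReal_mono hEfin (measure_mono hsubset)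
      have h0le : 0 ≤ (ρ (Set.Ioc x z)).toReal := ENNReal.toReal_nonneg
      calc |P.Gp p (x:EReal) - P.Gp p (z:EReal)| ≤ P.Cg * (ρ (Set.Ioc x z)).toReal := by
            rw [hρ]; exact hb
        _ < ε := eps_chain P.Cg_nonneg hmono hEN htR0
  · -- positive mass → discontinuous
    intro hpos hcont
    have hposM := P.chargeM z p hpos
    have hWμ' : P.Wl (P.occM (z : EReal) p) ≠ ⊤ := by
      rw [P.occM_eq_occK]
      exact P.Wl_occK_ne_top _ (P.thrKerM_drift _) (P.thrKerM_wint _) p hp.2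
    have hfin : P.occM (z : EReal) p {z} ≠ ⊤ := by
      refine ne_top_of_le_ne_top hWμ' ?_
      rw [Bandit.Wl]
      calc P.occM (z : EReal) p {z} ≤ P.occM (z : EReal) p Set.univ :=
            measure_mono (Set.subset_univ _)
        _ = ∫⁻ _, 1 ∂(P.occM (z : EReal) p) := by rw [lintegral_one]
        _ ≤ ∫⁻ x, ENNReal.ofReal (P.w x) ∂(P.occM (z : EReal) p) := by
            refine lintegral_mono fun x => ?_
            rw [← ENNReal.ofReal_one]
            exact ENNReal.ofReal_le_ofReal (P.hw_one x)
    have htr : 0 < (P.occM (z : EReal) p {z}).toReal :=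
      ENNReal.toReal_pos (ne_of_gt hposM) hfin
    have hjump := P.jump_formula hp z
    have hgpos := h1 z (z : EReal)
    have hne : P.Gmp p (z : EReal) ≠ P.Gp p (z : EReal) := by
      intro he
      rw [he, sub_self] at hjump
      nlinarith
    have hlim1 : Tendsto (fun z' : ℝ => P.Gp p (z' : EReal)) (nhdsWithin z (Set.Iio z))
        (nhds (P.Gp p (z : EReal))) := hcont.continuousWithinAt
    have hlim2 : Tendsto (fun z' : ℝ => P.Gp p (z' : EReal)) (nhdsWithin z (Set.Iio z))
        (nhds (P.Gmp p (z : EReal))) := by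
      rw [Metric.tendsto_nhdsWithin_nhds]
      intro ε hε
      set ρ' := (P.occM (z : EReal) p).withDensity (fun x => ENNReal.ofReal (P.w x)) with hρ'
      haveI : IsFiniteMeasure ρ' := by
        constructor
        rw [hρ', withDensity_apply _ MeasurableSet.univ, Measure.restrict_univ]
        exact lt_top_iff_ne_top.2 hWμ'
      have hCg1 : 0 < P.Cg + 1 := by linarith [P.Cg_nonneg]
      obtain ⟨N, hN⟩ := measure_shrink ρ' (fun n : ℕ => Set.Ioo (z - 1/(n+1)) z)
        (fun n => measurableSet_Ioo) (antitoneIoo z)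
        (by rw [iInterIoo z]; exact measure_empty) (ε / (P.Cg + 1)) (div_pos hε hCg1)
      have hδpos : (0:ℝ) < 1/(N+1) := by positivity
      refine ⟨1/(N+1), hδpos, fun x hxI hx => ?_⟩
      rw [Real.dist_eq] at hx
      simp only [Real.dist_eq]
      have hxz : x < z := hxI
      have habs := abs_lt.1 hx
      have hform := P.GpM_formula hp x z hxz
      have hb := P.integral_indicator_le (P.occM (z : EReal) p) hWμ'
        (measurableSet_Ioo (a := x) (b := z)) (x : EReal)
      rw [← hform] at hb
      have hEfin : ρ' (Set.Ioo (z - 1/(N+1)) z) ≠ ⊤ := measure_ne_top ρ' _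
      have hEN : (ρ' (Set.Ioo (z - 1/(N+1)) z)).toReal < ε / (P.Cg + 1) :=
        ENNReal.toReal_lt_of_lt_ofReal hN
      have hsubset : Set.Ioo x z ⊆ Set.Ioo (z - 1/(N+1)) z := by
        intro y hy
        exact ⟨by linarith [hy.1, habs.1], hy.2⟩
      have hmono : (ρ' (Set.Ioo x z)).toReal ≤ (ρ' (Set.Ioo (z - 1/(N+1)) z)).toReal :=
        ENNReal.toReal_mono hEfin (measure_mono hsubset)
      have htR0 : 0 ≤ (ρ' (Set.Ioo (z - 1/(N+1)) z)).toReal := ENNReal.toReal_nonneg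
      have h0le : 0 ≤ (ρ' (Set.Ioo x z)).toReal := ENNReal.toReal_nonneg
      calc |P.Gp p (x:EReal) - P.Gmp p (z:EReal)| ≤ P.Cg * (ρ' (Set.Ioo x z)).toReal := by
            rw [hρ']; exact hb
        _ < ε := eps_chain P.Cg_nonneg hmono hEN htR0
    exact hne (tendsto_nhds_unique hlim2 hlim1)
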